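/- SIC rule for if-then-else: let C : X × 𝕍 → Prop, and A, B : X × 𝕍 → V be terms, with tC a SIC for the formula C, and tA, tB SICs for the terms A, B, all w.r.t. X. Then Ψ v := (tC v ∧ ((∀ x, C (x, v)) → tA v) ∧ ((∀ x, ¬ C (x, v)) → tB v)) ∨ (tA v ∧ tB v ∧ ∀ x, A (x, v) = B (x, v)) is a SIC for the term fun (x, v) => if C (x, v) then A (x, v) else B (x, v) (using classical choice for the if), w.r.t. X. -/
import Mathlib


open Classical in
/-- SIC rule for if-then-else. -/
theorem sic_ite {X 𝕍 V : Type*} (C : X × 𝕍 → Prop) (A B : X × 𝕍 → V)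
    (tC tA tB : 𝕍 → Prop)
    (hC : ∀ v, tC v → ∀ x y : X, C (x, v) ↔ C (y, v))
    (hA : ∀ v, tA v → ∀ x y : X, A (x, v) = A (y, v))
    (hB : ∀ v, tB v → ∀ x y : X, B (x, v) = B (y, v)) :
    ∀ v, ((tC v ∧ ((∀ x, C (x, v)) → tA v) ∧ ((∀ x, ¬ C (x, v)) → tB v)) ∨
          (tA v ∧ tB v ∧ ∀ x, A (x, v) = B (x, v))) →
      ∀ x y : X,
        (if C (x, v) then A (x, v) else B (x, v)) =
        (if C (y, v) then A (y, v) else B (y, v)) := by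
  rintro v (⟨htC, hCA, hCB⟩ | ⟨htA, htB, hAB⟩) x y
  · by_cases hc : C (x, v)
    · have hcy : C (y, v) := (hC v htC x y).mp hc
      have hall : ∀ z, C (z, v) := fun z => (hC v htC x z).mp hc
      simp [hc, hcy, hA v (hCA hall) x y]
    · have hcy : ¬ C (y, v) := fun h => hc ((hC v htC y x).mp h)
      have hall : ∀ z, ¬ C (z, v) := fun z h => hc ((hC v htC z x).mp h)
      simp [hc, hcy, hB v (hCB hall) x y]
  · by_cases hcx : C (x, v) <;> by_cases hcy : C (y, v) <;>
      simp [hcx, hcy, hA v htA x y, hB v htB x y, hAB x, hAB y]
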